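/- Let K be a field, S = K[x_1, …, x_n], D an integral domain, and φ : S → D a K-algebra homomorphism whose kernel I is generated by a set B of pure binomials m − m′ (differences of two monomials). Let V ⊆ {x_1, …, x_n} be a subset of the variables such that for every generator m − m′ ∈ B, the monomial m involves some variable of V if and only if m′ involves some variable of V. Define φ_V : S → D by φ_V(x_i) = 0 for x_i ∈ V and φ_V(x_i) = φ(x_i) otherwise. Then ker φ_V = I + (x_i : x_i ∈ V); in particular I + (x_i : x_i ∈ V) is a prime ideal of S. -/

import Mathlib

open MvPolynomial

section Aux

variable {K D : Type*} [Field K] [CommRing D] [Algebra K D] {n : ℕ}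
  (φ : MvPolynomial (Fin n) K →ₐ[K] D) (V : Set (Fin n)) [DecidablePred (· ∈ V)]

private lemma aux_eval_zero (d : Fin n →₀ ℕ) (c : K) (h : ∃ i ∈ V, d i ≠ 0) :
    (aeval fun i => if i ∈ V then (0 : D) else φ (X i)) (monomial d c) = 0 := by
  obtain ⟨i, hiV, hdi⟩ := h
  rw [aeval_monomial]
  have : (d.prod fun i k => (if i ∈ V then (0 : D) else φ (X i)) ^ k) = 0 := by
    refine Finset.prod_eq_zero (Finsupp.mem_support_iff.mpr hdi) ?_
    simp only [if_pos hiV]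
    exact zero_pow hdi
  rw [this, mul_zero]

private lemma aux_eval_eq (d : Fin n →₀ ℕ) (c : K) (h : ∀ i ∈ V, d i = 0) :
    (aeval fun i => if i ∈ V then (0 : D) else φ (X i)) (monomial d c)
      = φ (monomial d c) := by
  conv_rhs => rw [aeval_unique φ]
  rw [aeval_monomial, aeval_monomial]
  congr 1
  refine Finset.prod_congr rfl fun i hi => ?_
  have hiV : i ∉ V := fun hv => Finsupp.mem_support_iff.mp hi (h i hv)
  simp only [if_neg hiV, Function.comp_apply]

private lemma aux_mem_span (d : Fin n →₀ ℕ) (c : K) (h : ∃ i ∈ V, d i ≠ 0) :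
    (monomial d c : MvPolynomial (Fin n) K)
      ∈ Ideal.span ((fun i => (X i : MvPolynomial (Fin n) K)) '' V) := by
  obtain ⟨i, hiV, hdi⟩ := h
  have hX : (X i : MvPolynomial (Fin n) K)
      ∈ Ideal.span ((fun i => (X i : MvPolynomial (Fin n) K)) '' V) :=
    Ideal.subset_span ⟨i, hiV, rfl⟩
  have : (monomial d c : MvPolynomial (Fin n) K)
      = monomial (d - Finsupp.single i 1) c * X i := by
    rw [X, monomial_mul, mul_one]
    have hd : (d - Finsupp.single i 1) + Finsupp.single i 1 = d := by
      ext j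
      simp only [Finsupp.coe_add, Finsupp.coe_tsub, Pi.add_apply, Pi.sub_apply]
      by_cases hj : j = i
      · subst hj
        simp only [Finsupp.single_eq_same]
        omega
      · simp [Finsupp.single_eq_of_ne' (Ne.symm hj)]
    rw [hd]
  rw [this]
  exact Ideal.mul_mem_left _ _ hX

end Aux

/-- Let `φ : K[x₁,…,x_n] → D` (`D` a domain) have kernel `I` generated by pure binomials
`m − m′` such that `m` involves a variable of `V` iff `m′` does. Setting the variables of `V`
to zero in `φ` yields `φ_V` with `ker φ_V = I + (x_i : i ∈ V)`; in particular this ideal is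
prime. -/
theorem kernel_binomial_vanishing {K D : Type*} [Field K] [CommRing D] [IsDomain D]
    [Algebra K D] {n : ℕ} (φ : MvPolynomial (Fin n) K →ₐ[K] D)
    (B : Set (MvPolynomial (Fin n) K))
    (hgen : Ideal.span B = RingHom.ker (φ : MvPolynomial (Fin n) K →+* D))
    (V : Set (Fin n)) [DecidablePred (· ∈ V)]
    (hbin : ∀ b ∈ B, ∃ d d' : Fin n →₀ ℕ,
      b = monomial d 1 - monomial d' 1 ∧
        ((∃ i ∈ V, d i ≠ 0) ↔ (∃ i ∈ V, d' i ≠ 0))) :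
    RingHom.ker
        ((aeval fun i => if i ∈ V then (0 : D) else φ (X i) :
            MvPolynomial (Fin n) K →ₐ[K] D) :
          MvPolynomial (Fin n) K →+* D)
      = Ideal.span B ⊔ Ideal.span ((fun i => (X i : MvPolynomial (Fin n) K)) '' V)
    ∧ (Ideal.span B ⊔
        Ideal.span ((fun i => (X i : MvPolynomial (Fin n) K)) '' V)).IsPrime := by
  set ψ : MvPolynomial (Fin n) K →ₐ[K] D :=
    aeval fun i => if i ∈ V then (0 : D) else φ (X i) with hψ
  have key : RingHom.ker (ψ : MvPolynomial (Fin n) K →+* D)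
      = Ideal.span B ⊔ Ideal.span ((fun i => (X i : MvPolynomial (Fin n) K)) '' V) := by
    apply le_antisymm
    · -- ker ψ ≤ span B ⊔ span (X '' V)
      intro f hf
      classical
      have hf0 : ψ f = 0 := hf
      -- split f by whether monomials involve V
      set p : (Fin n →₀ ℕ) → Prop := fun d => ∃ i ∈ V, d i ≠ 0 with hp
      have hdecp : DecidablePred p := fun d => by
        unfold p; infer_instance
      set a : MvPolynomial (Fin n) K :=
        ∑ d ∈ f.support.filter p, monomial d (coeff d f) with ha
      set b : MvPolynomial (Fin n) K :=
        ∑ d ∈ f.support.filter (fun d => ¬ p d), monomial d (coeff d f) with hb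
      have hab : a + b = f := by
        rw [ha, hb, Finset.sum_filter_add_sum_filter_not]
        exact f.support_sum_monomial_coeff
      have haMem : a ∈ Ideal.span ((fun i => (X i : MvPolynomial (Fin n) K)) '' V) := by
        refine Ideal.sum_mem _ fun d hd => ?_
        exact aux_mem_span V d _ (Finset.mem_filter.mp hd).2
      have hψa : ψ a = 0 := by
        rw [ha, map_sum]
        refine Finset.sum_eq_zero fun d hd => ?_
        exact aux_eval_zero φ V d _ (Finset.mem_filter.mp hd).2
      have hψb : ψ b = φ b := by
        rw [hb, map_sum, map_sum]
        refine Finset.sum_congr rfl fun d hd => ?_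
        refine aux_eval_eq φ V d _ fun i hi => ?_
        by_contra hne
        exact (Finset.mem_filter.mp hd).2 ⟨i, hi, hne⟩
      have hφb : φ b = 0 := by
        have : ψ b = 0 := by
          have := congrArg ψ hab
          rw [map_add, hψa, zero_add] at this
          rw [this, hf0]
        rwa [hψb] at this
      have hbMem : b ∈ Ideal.span B := by
        rw [hgen]; exact hφb
      rw [← hab]
      exact Ideal.add_mem _ (Ideal.mem_sup_right haMem) (Ideal.mem_sup_left hbMem)
    · refine sup_le ?_ ?_
      · rw [Ideal.span_le]
        intro b hb
        obtain ⟨d, d', hbd, hiff⟩ := hbin b hb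
        have hφb : φ b = 0 := by
          have : b ∈ Ideal.span B := Ideal.subset_span hb
          rw [hgen] at this; exact this
        show ψ b = 0
        by_cases hV : ∃ i ∈ V, d i ≠ 0
        · have hV' : ∃ i ∈ V, d' i ≠ 0 := hiff.mp hV
          rw [hbd, map_sub, aux_eval_zero φ V d 1 hV, aux_eval_zero φ V d' 1 hV', sub_zero]
        · have hV' : ¬ ∃ i ∈ V, d' i ≠ 0 := fun h => hV (hiff.mpr h)
          push_neg at hV hV'
          rw [hbd, map_sub, aux_eval_eq φ V d 1 (by simpa using hV),
            aux_eval_eq φ V d' 1 (by simpa using hV'), ← map_sub, ← hbd, hφb]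
      · rw [Ideal.span_le]
        rintro _ ⟨i, hiV, rfl⟩
        show ψ (X i) = 0
        rw [hψ, aeval_X, if_pos hiV]
  refine ⟨key, ?_⟩
  rw [← key]
  exact RingHom.ker_isPrime _
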